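/- In Kretschmer's setting with α > 0, let δ ∈ (0,1) and b := χ_{[0,δ]}. Then val(P_b) = val(D_b) = min{δ, α}, the dual problem (D_b) has an optimal solution (namely z = χ_{[0, min{α,δ}]}), and consequently ∂v(b) ≠ ∅; moreover, the primal problem (P_b) has an optimal solution if and only if α ≤ δ. -/

import Mathlib

open MeasureTheory

/-- Lebesgue measure on `[0,1]`. -/
noncomputable def mu : Measure ℝ := volume.restrict (Set.Icc (0 : ℝ) 1)

lemma mu_ne_top (s : Set ℝ) : mu s ≠ ⊤ := by
  have h1 : mu s ≤ mu Set.univ := measure_mono (Set.subset_univ s)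
  have h2 : mu Set.univ = ENNReal.ofReal 1 := by
    simp [mu, Measure.restrict_apply_univ, Real.volume_Icc]
  exact ne_top_of_le_ne_top (by simp [h2]) h1

/-- Feasibility of `(x, r)` for the primal problem with right-hand side `y`. -/
def Feas (y : ℝ → ℝ) (p : (ℝ → ℝ) × ℝ) : Prop :=
  MemLp p.1 2 mu ∧ (∀ᵐ t ∂mu, 0 ≤ p.1 t) ∧ 0 ≤ p.2 ∧
  ∀ᵐ t ∂mu, y t ≤ (∫ s in Set.Ioc t 1, p.1 s ∂mu) + p.2

/-- The cost `c*(x,r) = ∫_0^1 t x(t) dt + α r`. -/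
noncomputable def cost (α : ℝ) (p : (ℝ → ℝ) × ℝ) : ℝ :=
  (∫ t, t * p.1 t ∂mu) + α * p.2

/-- Kretschmer's value function on `Y = L²[0,1]`. -/
noncomputable def val (α : ℝ) (y : Lp ℝ 2 mu) : EReal :=
  ⨅ (p : (ℝ → ℝ) × ℝ) (_ : Feas (⇑y) p), ((cost α p : ℝ) : EReal)

/-- Dual feasibility: `z ∈ L²₊`, `∫_0^t z ≤ t` a.e. and `∫_0^1 z ≤ α`. -/
def DFeas (α : ℝ) (z : ℝ → ℝ) : Prop :=
  MemLp z 2 mu ∧ (∀ᵐ t ∂mu, 0 ≤ z t) ∧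
  (∀ᵐ t ∂mu, (∫ s in Set.Ioc 0 t, z s ∂mu) ≤ t) ∧ (∫ t, z t ∂mu) ≤ α

/-- The value of the dual problem with right-hand side `b`. -/
noncomputable def valD (α : ℝ) (b : ℝ → ℝ) : EReal :=
  ⨆ (z : ℝ → ℝ) (_ : DFeas α z), ((∫ t, b t * z t ∂mu : ℝ) : EReal)

/-- The subdifferential of the value function at `b ∈ L²`, with `(L²)* ≅ L²`. -/
noncomputable def subdiffL2 (α : ℝ) (b : Lp ℝ 2 mu) : Set (Lp ℝ 2 mu) :=
  {z | ∃ r : ℝ, val α b = (r : EReal) ∧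
    ∀ y : Lp ℝ 2 mu, (((inner ℝ (y - b) z : ℝ) + r : ℝ) : EReal) ≤ val α y}

/-- The indicator function of a measurable set `s ⊆ ℝ` as an element of `L²[0,1]`. -/
noncomputable def chiLp (s : Set ℝ) (hs : MeasurableSet s) : Lp ℝ 2 mu :=
  indicatorConstLp 2 hs (mu_ne_top s) (1 : ℝ)



open ENNReal

instance : IsFiniteMeasure mu := by
  constructor; rw [mu, Measure.restrict_apply_univ, Real.volume_Icc]; simp

lemma ae_mem_Icc : ∀ᵐ t ∂mu, t ∈ Set.Icc (0:ℝ) 1 := ae_restrict_mem measurableSet_Icc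

lemma integrable_of_memL2 {f : ℝ → ℝ} (hf : MemLp f 2 mu) : Integrable f mu :=
  hf.integrable (by norm_num)

lemma memL2_indicator (s : Set ℝ) (hs : MeasurableSet s) (C : ℝ) :
    MemLp (s.indicator (fun _ => C)) 2 mu := by
  apply MemLp.of_bound ((aestronglyMeasurable_indicator_iff hs).2 aestronglyMeasurable_const) |C|
  filter_upwards with t
  rw [Set.indicator]
  split <;> simp [abs_nonneg]

lemma key_meas (c : ℝ) (hc0 : 0 ≤ c) (x : ℝ → ℝ) (hxm : Measurable x)
    (hxi : Integrable x mu) (hx0 : ∀ s, 0 ≤ x s) :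
    ∫ t in Set.Icc 0 c, (∫ s in Set.Ioc t 1, x s ∂mu) ∂mu ≤ ∫ s, (min s c) * x s ∂mu := by
  set g : ℝ → ℝ≥0∞ := fun s => ENNReal.ofReal (x s) with hg_def
  have hg : Measurable g := hxm.ennreal_ofReal
  have hgnorm : g = fun s => (‖x s‖₊ : ℝ≥0∞) := by
    funext s
    rw [hg_def, ← enorm_eq_nnnorm, ← ofReal_norm, Real.norm_eq_abs, abs_of_nonneg (hx0 s)]
  have hfin : ∫⁻ s, g s ∂mu < ⊤ := by
    rw [hgnorm]; exact hxi.2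
  set F : ℝ → ℝ := fun t => ∫ s in Set.Ioc t 1, x s ∂mu with hF_def
  have hFl : ∀ t, ENNReal.ofReal (F t) = ∫⁻ s in Set.Ioc t 1, g s ∂mu := by
    intro t
    have h1 : F t = (∫⁻ s in Set.Ioc t 1, g s ∂mu).toReal := by
      rw [hF_def]
      exact integral_eq_lintegral_of_nonneg_ae (Filter.Eventually.of_forall (fun s => hx0 s))
        hxm.aestronglyMeasurable
    rw [h1, ENNReal.ofReal_toReal]
    exact ne_top_of_le_ne_top hfin.ne (setLIntegral_le_lintegral _ _)
  have hF0 : ∀ t, 0 ≤ F t := fun t => setIntegral_nonneg measurableSet_Ioc (fun s _ => hx0 s)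
  have hFanti : Antitone F := by
    intro t t' htt'
    exact setIntegral_mono_set hxi.integrableOn
      (Filter.Eventually.of_forall (fun s => hx0 s))
      (HasSubset.Subset.eventuallyLE (Set.Ioc_subset_Ioc_left htt'))
  have hFm : Measurable F := hFanti.measurable
  -- LHS as lintegral
  have hLHS : ∫ t in Set.Icc 0 c, F t ∂mu
      = (∫⁻ t in Set.Icc 0 c, ENNReal.ofReal (F t) ∂mu).toReal :=
    integral_eq_lintegral_of_nonneg_ae (Filter.Eventually.of_forall (fun t => hF0 t))
      hFm.aestronglyMeasurable.restrict
  set H : ℝ → ℝ → ℝ≥0∞ := fun t s =>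
    Set.indicator {p : ℝ × ℝ | p.1 ∈ Set.Icc 0 c ∧ p.1 < p.2 ∧ p.2 ≤ 1}
      (fun p => g p.2) (t, s) with hH_def
  have hSet : MeasurableSet {p : ℝ × ℝ | p.1 ∈ Set.Icc 0 c ∧ p.1 < p.2 ∧ p.2 ≤ 1} := by
    have : {p : ℝ × ℝ | p.1 ∈ Set.Icc 0 c ∧ p.1 < p.2 ∧ p.2 ≤ 1}
        = (Prod.fst ⁻¹' Set.Icc 0 c) ∩ ({p : ℝ × ℝ | p.1 < p.2} ∩ Prod.snd ⁻¹' Set.Iic 1) := by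
      ext p; simp [Set.mem_setOf_eq, Set.mem_Iic]
    rw [this]
    exact (measurable_fst measurableSet_Icc).inter
      ((measurableSet_lt measurable_fst measurable_snd).inter (measurable_snd measurableSet_Iic))
  have step2 : ∫⁻ t in Set.Icc 0 c, ENNReal.ofReal (F t) ∂mu
      = ∫⁻ t, ∫⁻ s, H t s ∂mu ∂mu := by
    rw [← lintegral_indicator measurableSet_Icc]
    apply lintegral_congr
    intro t
    by_cases ht : t ∈ Set.Icc (0:ℝ) c
    · rw [Set.indicator_of_mem ht, hFl t, ← lintegral_indicator measurableSet_Ioc]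
      apply lintegral_congr
      intro s
      simp only [hH_def, Set.indicator_apply, Set.mem_Ioc, Set.mem_setOf_eq, ht, true_and]
    · rw [Set.indicator_of_notMem ht]
      symm
      simp only [hH_def, Set.indicator_apply, Set.mem_setOf_eq, ht, false_and, if_false]
      exact lintegral_zero
  have hswap : ∫⁻ t, ∫⁻ s, H t s ∂mu ∂mu = ∫⁻ s, ∫⁻ t, H t s ∂mu ∂mu := by
    apply lintegral_lintegral_swap
    exact ((hg.comp measurable_snd).indicator hSet).aemeasurable
  have step4 : ∀ s : ℝ, ∫⁻ t, H t s ∂mu ≤ ENNReal.ofReal (min s c) * g s := by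
    intro s
    have hb : ∀ t, H t s ≤ (Set.Icc 0 c ∩ Set.Iio s).indicator (fun _ => g s) t := by
      intro t
      rw [hH_def]
      simp only [Set.indicator_apply, Set.mem_setOf_eq, Set.mem_inter_iff, Set.mem_Iio]
      split_ifs with h1 h2
      · exact le_refl _
      · exact absurd ⟨h1.1, h1.2.1⟩ h2
      · exact zero_le
      · exact le_refl _
    calc ∫⁻ t, H t s ∂mu ≤ ∫⁻ t, (Set.Icc 0 c ∩ Set.Iio s).indicator (fun _ => g s) t ∂mu :=
          lintegral_mono hb
      _ = g s * mu (Set.Icc 0 c ∩ Set.Iio s) :=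
          lintegral_indicator_const (measurableSet_Icc.inter measurableSet_Iio) _
      _ ≤ g s * ENNReal.ofReal (min s c) := by
          apply mul_le_mul_right
          have h1 : mu (Set.Icc 0 c ∩ Set.Iio s) ≤ volume (Set.Icc 0 c ∩ Set.Iio s) :=
            Measure.restrict_le_self _
          rcases le_total s c with h | h
          · rw [min_eq_left h]
            refine h1.trans ?_
            refine le_trans (measure_mono ?_ : volume (Set.Icc 0 c ∩ Set.Iio s) ≤ volume (Set.Icc 0 s)) ?_
            · intro t ⟨ht1, ht2⟩; exact ⟨ht1.1, le_of_lt ht2⟩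
            · rw [Real.volume_Icc]; simp
          · rw [min_eq_right h]
            refine h1.trans ?_
            refine le_trans (measure_mono Set.inter_subset_left) ?_
            rw [Real.volume_Icc]; simp
      _ = ENNReal.ofReal (min s c) * g s := mul_comm _ _
  have step5 : ∫⁻ s, ENNReal.ofReal (min s c) * g s ∂mu
      = ∫⁻ s, ENNReal.ofReal (min s c * x s) ∂mu := by
    apply lintegral_congr_ae
    filter_upwards [ae_mem_Icc] with s hs
    rw [hg_def, ENNReal.ofReal_mul (le_min hs.1 hc0)]
  have hRfin : ∫⁻ s, ENNReal.ofReal (min s c * x s) ∂mu < ⊤ := by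
    refine lt_of_le_of_lt ?_ hfin
    apply lintegral_mono_ae
    filter_upwards [ae_mem_Icc] with s hs
    rw [hg_def]
    apply ENNReal.ofReal_le_ofReal
    calc min s c * x s ≤ 1 * x s := by
          apply mul_le_mul_of_nonneg_right _ (hx0 s)
          exact le_trans (min_le_left _ _) hs.2
      _ = x s := one_mul _
  have hRHS : ∫ s, min s c * x s ∂mu = (∫⁻ s, ENNReal.ofReal (min s c * x s) ∂mu).toReal := by
    apply integral_eq_lintegral_of_nonneg_ae
    · filter_upwards [ae_mem_Icc] with s hs
      exact mul_nonneg (le_min hs.1 hc0) (hx0 s)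
    · exact (((continuous_id.min continuous_const).measurable).mul hxm).aestronglyMeasurable
  rw [hLHS, hRHS]
  apply ENNReal.toReal_mono hRfin.ne
  rw [step2, hswap, ← step5]
  exact lintegral_mono (fun s => step4 s)

lemma integrable_mul_bdd {x : ℝ → ℝ} (hxi : Integrable x mu) {φ : ℝ → ℝ}
    (hφ : Measurable φ) (K : ℝ) (hK : ∀ᵐ s ∂mu, |φ s| ≤ K) :
    Integrable (fun s => φ s * x s) mu := by
  apply Integrable.mono (hxi.norm.const_mul K)
    (hφ.aestronglyMeasurable.mul hxi.aestronglyMeasurable)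
  filter_upwards [hK] with s hs
  simp only [Pi.mul_apply, Real.norm_eq_abs, abs_mul, abs_abs]
  exact mul_le_mul_of_nonneg_right (hs.trans (le_abs_self K)) (abs_nonneg _)

lemma integrable_min_mul {x : ℝ → ℝ} (hxi : Integrable x mu) (c : ℝ) (hc0 : 0 ≤ c) :
    Integrable (fun s => min s c * x s) mu := by
  apply integrable_mul_bdd hxi ((measurable_id.min measurable_const)) (max 1 c)
  filter_upwards [ae_mem_Icc] with s hs
  simp only [id_eq]
  rw [abs_of_nonneg (le_min hs.1 hc0)]
  exact le_trans (min_le_left _ _) (le_trans hs.2 (le_max_left _ _))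

lemma integrable_id_mul {x : ℝ → ℝ} (hxi : Integrable x mu) :
    Integrable (fun s => s * x s) mu := by
  apply integrable_mul_bdd hxi measurable_id 1
  filter_upwards [ae_mem_Icc] with s hs
  simp only [id_eq]
  rw [abs_of_nonneg hs.1]; exact hs.2

lemma key (c : ℝ) (hc0 : 0 ≤ c) (x : ℝ → ℝ) (hxm : MemLp x 2 mu)
    (hx0 : ∀ᵐ s ∂mu, 0 ≤ x s) :
    ∫ t in Set.Icc 0 c, (∫ s in Set.Ioc t 1, x s ∂mu) ∂mu ≤ ∫ s, (min s c) * x s ∂mu := by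
  have hxi : Integrable x mu := integrable_of_memL2 hxm
  set x' : ℝ → ℝ := fun s => max (hxi.1.mk x s) 0 with hx'_def
  have hx'm : Measurable x' := (hxi.1.stronglyMeasurable_mk.measurable).max measurable_const
  have hxx' : x =ᵐ[mu] x' := by
    filter_upwards [hxi.1.ae_eq_mk, hx0] with s h1 h2
    rw [hx'_def]; simp only [← h1]; rw [max_eq_left h2]
  have hx'i : Integrable x' mu := hxi.congr hxx'
  have hx'0 : ∀ s, 0 ≤ x' s := fun s => le_max_right _ _
  have hFeq : (fun t => ∫ s in Set.Ioc t 1, x s ∂mu) = fun t => ∫ s in Set.Ioc t 1, x' s ∂mu := by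
    funext t; exact integral_congr_ae (ae_restrict_of_ae hxx')
  rw [hFeq]
  calc ∫ t in Set.Icc 0 c, (∫ s in Set.Ioc t 1, x' s ∂mu) ∂mu
      ≤ ∫ s, min s c * x' s ∂mu := key_meas c hc0 x' hx'm hx'i hx'0
    _ = ∫ s, min s c * x s ∂mu := by
        apply integral_congr_ae
        filter_upwards [hxx'] with s hs
        rw [hs]

lemma F_antitone {x : ℝ → ℝ} (hxi : Integrable x mu) (hx0 : ∀ᵐ s ∂mu, 0 ≤ x s) :
    Antitone (fun t => ∫ s in Set.Ioc t 1, x s ∂mu) := by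
  intro t t' htt'
  exact setIntegral_mono_set hxi.integrableOn (ae_restrict_of_ae hx0)
    (HasSubset.Subset.eventuallyLE (Set.Ioc_subset_Ioc_left htt'))

lemma F_integrable {x : ℝ → ℝ} (hxi : Integrable x mu) (hx0 : ∀ᵐ s ∂mu, 0 ≤ x s) :
    Integrable (fun t => ∫ s in Set.Ioc t 1, x s ∂mu) mu := by
  apply (memLp_one_iff_integrable).1
  apply MemLp.of_bound ((F_antitone hxi hx0).measurable.stronglyMeasurable.aestronglyMeasurable)
    (∫ s, |x s| ∂mu)
  filter_upwards with t
  rw [Real.norm_eq_abs]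
  calc |∫ s in Set.Ioc t 1, x s ∂mu| ≤ ∫ s in Set.Ioc t 1, |x s| ∂mu := by
        simpa [Real.norm_eq_abs] using
          norm_integral_le_integral_norm (μ := mu.restrict (Set.Ioc t 1)) x
    _ ≤ ∫ s, |x s| ∂mu := by
        apply setIntegral_le_integral hxi.abs
        filter_upwards with s using abs_nonneg _

lemma mu_Icc0 (a : ℝ) (ha : 0 ≤ a) (ha1 : a ≤ 1) : mu (Set.Icc 0 a) = ENNReal.ofReal a := by
  rw [mu, Measure.restrict_apply measurableSet_Icc, Set.Icc_inter_Icc]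
  simp [ha1, Real.volume_Icc]

/-- refined weak duality: `∫_{[0,c]} y ≤ ∫ s x(s) ds + c·r` for any `p` feasible for `y`. -/
lemma weak0 (c : ℝ) (hc0 : 0 ≤ c) (hc1 : c ≤ 1) {y : ℝ → ℝ} (hy : Integrable y mu)
    {p : (ℝ → ℝ) × ℝ} (hp : Feas y p) :
    ∫ t in Set.Icc 0 c, y t ∂mu ≤ (∫ s, min s c * p.1 s ∂mu) + c * p.2 := by
  obtain ⟨hx2, hx0, hr0, hfe⟩ := hp
  have hxi : Integrable p.1 mu := integrable_of_memL2 hx2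
  have hFi : Integrable (fun t => (∫ s in Set.Ioc t 1, p.1 s ∂mu) + p.2) mu :=
    (F_integrable hxi hx0).add (integrable_const _)
  calc ∫ t in Set.Icc 0 c, y t ∂mu
      ≤ ∫ t in Set.Icc 0 c, ((∫ s in Set.Ioc t 1, p.1 s ∂mu) + p.2) ∂mu := by
        apply integral_mono_ae hy.integrableOn hFi.integrableOn (ae_restrict_of_ae hfe)
    _ = (∫ t in Set.Icc 0 c, (∫ s in Set.Ioc t 1, p.1 s ∂mu) ∂mu)
        + (mu (Set.Icc 0 c)).toReal * p.2 := by
        rw [integral_add ((F_integrable hxi hx0).integrableOn) (integrable_const _).integrableOn,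
          setIntegral_const, smul_eq_mul, measureReal_def]
    _ ≤ (∫ s, min s c * p.1 s ∂mu) + c * p.2 := by
        apply add_le_add (key c hc0 p.1 hx2 hx0)
        rw [mu_Icc0 c hc0 hc1, ENNReal.toReal_ofReal hc0]

lemma weak (α c : ℝ) (hc0 : 0 ≤ c) (hc1 : c ≤ 1) (hcα : c ≤ α) {y : ℝ → ℝ}
    (hy : Integrable y mu) {p : (ℝ → ℝ) × ℝ} (hp : Feas y p) :
    ∫ t in Set.Icc 0 c, y t ∂mu ≤ cost α p := by
  refine le_trans (weak0 c hc0 hc1 hy hp) ?_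
  rw [cost]
  apply add_le_add
  · apply integral_mono_ae (integrable_min_mul (integrable_of_memL2 hp.1) c hc0)
      (integrable_id_mul (integrable_of_memL2 hp.1))
    filter_upwards [hp.2.1] with s hs
    exact mul_le_mul_of_nonneg_right (min_le_left _ _) hs
  · exact mul_le_mul_of_nonneg_right hcα hp.2.2.1

instance : NullSingletonClass mu := by unfold mu; infer_instance

lemma mu_le_volume (s : Set ℝ) : mu s ≤ volume s := by
  rw [mu, Measure.restrict_apply']
  · exact measure_mono Set.inter_subset_left
  · exact measurableSet_Icc

lemma mu_Ioc0 (a b : ℝ) (ha : 0 ≤ a) (hb : b ≤ 1) : mu (Set.Ioc a b) = ENNReal.ofReal (b - a) := by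
  rw [mu, Measure.restrict_apply measurableSet_Ioc]
  have h : Set.Ioc a b ∩ Set.Icc 0 1 = Set.Ioc a b := by
    apply Set.inter_eq_self_of_subset_left
    intro x hx
    exact ⟨le_trans ha (le_of_lt hx.1), le_trans hx.2 hb⟩
  rw [h, Real.volume_Ioc]

/-- the indicator `χ_{[0,m]}` is dual feasible when `0 ≤ m ≤ min α 1`. -/
lemma dfeas_indicator (α m : ℝ) (hm0 : 0 ≤ m) (hm1 : m ≤ 1) (hmα : m ≤ α) :
    DFeas α ((Set.Icc 0 m).indicator 1) := by
  have h1 : (Set.Icc (0:ℝ) m).indicator (1 : ℝ → ℝ) = (Set.Icc (0:ℝ) m).indicator (fun _ => (1:ℝ)) := rfl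
  refine ⟨h1 ▸ memL2_indicator _ measurableSet_Icc 1, ?_, ?_, ?_⟩
  · filter_upwards with t
    exact Set.indicator_nonneg (fun _ _ => zero_le_one) t
  · filter_upwards [ae_mem_Icc] with t ht
    rw [h1]
    rw [setIntegral_indicator measurableSet_Icc, setIntegral_const, smul_eq_mul, mul_one, measureReal_def]
    apply ENNReal.toReal_le_of_le_ofReal ht.1
    refine le_trans (mu_le_volume _) ?_
    refine le_trans (measure_mono (Set.inter_subset_left)) ?_
    rw [Real.volume_Ioc]
    simp
  · rw [h1, integral_indicator_const _ measurableSet_Icc, smul_eq_mul, mul_one,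
      measureReal_def, mu_Icc0 m hm0 hm1, ENNReal.toReal_ofReal hm0]
    exact hmα

/-- value of `z = χ_B` against `b = χ_A` when `B ⊆ A`. -/
lemma pair_indicator (A B : Set ℝ) (hA : MeasurableSet A) (hB : MeasurableSet B) (hBA : B ⊆ A) :
    (∫ t, A.indicator 1 t * B.indicator 1 t ∂mu) = (mu B).toReal := by
  have h : ∀ t, A.indicator (1 : ℝ → ℝ) t * B.indicator (1 : ℝ → ℝ) t
      = B.indicator (fun _ => (1:ℝ)) t := by
    intro t
    by_cases ht : t ∈ B
    · rw [Set.indicator_of_mem ht, Set.indicator_of_mem (hBA ht), Set.indicator_of_mem ht]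
      simp
    · rw [Set.indicator_of_notMem ht, Set.indicator_of_notMem ht, mul_zero]
  rw [integral_congr_ae (Filter.Eventually.of_forall h),
    integral_indicator_const _ hB, smul_eq_mul, mul_one, measureReal_def]

/-- upper bound for dual objective values. -/
lemma dual_ub (α δ : ℝ) (hα : 0 < α) (hδ0 : 0 < δ) (hδ1 : δ < 1) {z : ℝ → ℝ}
    (hz : DFeas α z) :
    ∫ t, (Set.Icc 0 δ).indicator 1 t * z t ∂mu ≤ min δ α := by
  obtain ⟨hz2, hz0, hzc, hzα⟩ := hz
  have hzi : Integrable z mu := integrable_of_memL2 hz2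
  have h1 : ∫ t, (Set.Icc 0 δ).indicator 1 t * z t ∂mu = ∫ t in Set.Icc 0 δ, z t ∂mu := by
    have h : ∀ t, (Set.Icc 0 δ).indicator (1 : ℝ → ℝ) t * z t
        = (Set.Icc 0 δ).indicator z t := by
      intro t
      by_cases ht : t ∈ Set.Icc 0 δ
      · rw [Set.indicator_of_mem ht, Set.indicator_of_mem ht]; simp
      · rw [Set.indicator_of_notMem ht, Set.indicator_of_notMem ht, zero_mul]
    rw [integral_congr_ae (Filter.Eventually.of_forall h), integral_indicator measurableSet_Icc]
  rw [h1]
  apply le_min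
  · -- ≤ δ
    rw [← setIntegral_congr_set (Ioc_ae_eq_Icc (μ := mu))]
    apply _root_.le_of_forall_pos_le_add
    intro ε hε
    set u := min 1 (δ + ε) with hu
    have hδu : δ < u := lt_min hδ1 (by linarith)
    have hpos : 0 < mu (Set.Ioo δ u) := by
      rw [mu, Measure.restrict_apply' measurableSet_Icc]
      have hsub : Set.Ioo δ u ∩ Set.Icc 0 1 = Set.Ioo δ u := by
        apply Set.inter_eq_self_of_subset_left
        intro x hx
        exact ⟨le_of_lt (lt_trans hδ0 hx.1), le_of_lt (lt_of_lt_of_le hx.2 (min_le_left _ _))⟩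
      rw [hsub, Real.volume_Ioo]
      simp [hδu]
    have hex : ∃ t ∈ Set.Ioo δ u, (∫ s in Set.Ioc 0 t, z s ∂mu) ≤ t := by
      by_contra hcon
      push_neg at hcon
      have hsub : Set.Ioo δ u ⊆ {t | ¬ ((∫ s in Set.Ioc 0 t, z s ∂mu) ≤ t)} := by
        intro t ht
        exact not_le.2 (hcon t ht)
      have : mu (Set.Ioo δ u) = 0 :=
        measure_mono_null hsub (ae_iff.1 hzc)
      exact absurd this (ne_of_gt hpos)
    obtain ⟨t₀, ht₀I, ht₀⟩ := hex
    calc ∫ s in Set.Ioc 0 δ, z s ∂mu ≤ ∫ s in Set.Ioc 0 t₀, z s ∂mu := by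
          apply setIntegral_mono_set hzi.integrableOn (ae_restrict_of_ae hz0)
          exact HasSubset.Subset.eventuallyLE (Set.Ioc_subset_Ioc_right (le_of_lt ht₀I.1))
      _ ≤ t₀ := ht₀
      _ ≤ δ + ε := le_of_lt (lt_of_lt_of_le ht₀I.2 (min_le_right _ _))
  · -- ≤ α
    refine le_trans ?_ hzα
    exact setIntegral_le_integral hzi hz0

lemma exists_mem_of_pos {S : Set ℝ} (hS : 0 < mu S) {P : ℝ → Prop}
    (hP : ∀ᵐ t ∂mu, P t) : ∃ t ∈ S, P t := by
  by_contra hcon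
  push_neg at hcon
  have hsub : S ⊆ {t | ¬ P t} := fun t ht => hcon t ht
  exact absurd (measure_mono_null hsub (ae_iff.1 hP)) (ne_of_gt hS)

lemma mu_Ioo_pos {a b : ℝ} (ha : 0 ≤ a) (hab : a < b) (hb : b ≤ 1) : 0 < mu (Set.Ioo a b) := by
  rw [mu, Measure.restrict_apply' measurableSet_Icc]
  have hsub : Set.Ioo a b ∩ Set.Icc 0 1 = Set.Ioo a b := by
    apply Set.inter_eq_self_of_subset_left
    intro x hx
    exact ⟨le_trans ha (le_of_lt hx.1), le_trans (le_of_lt hx.2) hb⟩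
  rw [hsub, Real.volume_Ioo]
  simp [hab]

lemma not_opt (α δ : ℝ) (hδα : δ < α) (hδ0 : 0 < δ) (hδ1 : δ < 1)
    {p : (ℝ → ℝ) × ℝ} (hp : Feas ((Set.Icc 0 δ).indicator 1) p)
    (hcost : cost α p = δ) : False := by
  obtain ⟨hx2, hx0, hr0, hfe⟩ := hp
  have hxi : Integrable p.1 mu := integrable_of_memL2 hx2
  -- Step A : ∫_{[0,δ]} b = δ
  have hA : ∫ t in Set.Icc 0 δ, (Set.Icc 0 δ).indicator (1 : ℝ → ℝ) t ∂mu = δ := by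
    rw [setIntegral_indicator measurableSet_Icc, Set.inter_self]
    simp only [Pi.one_apply]
    rw [setIntegral_const, smul_eq_mul, measureReal_def, mu_Icc0 δ (le_of_lt hδ0) (le_of_lt hδ1),
      ENNReal.toReal_ofReal (le_of_lt hδ0), mul_one]
  have hB : δ ≤ (∫ s, min s δ * p.1 s ∂mu) + δ * p.2 := by
    have hw := weak0 δ (le_of_lt hδ0) (le_of_lt hδ1) (y := ((Set.Icc 0 δ).indicator 1))
      (integrable_of_memL2 (memL2_indicator (Set.Icc 0 δ) measurableSet_Icc 1))
      ⟨hx2, hx0, hr0, hfe⟩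
    rwa [hA] at hw
  have hCle : (∫ s, min s δ * p.1 s ∂mu) ≤ ∫ s, s * p.1 s ∂mu := by
    apply integral_mono_ae (integrable_min_mul hxi δ (le_of_lt hδ0)) (integrable_id_mul hxi)
    filter_upwards [hx0] with s hs
    exact mul_le_mul_of_nonneg_right (min_le_left _ _) hs
  -- r = 0
  have hr : p.2 = 0 := by
    rw [cost] at hcost
    by_contra hne
    have hrpos : 0 < p.2 := lt_of_le_of_ne hr0 (Ne.symm hne)
    nlinarith
  rw [hr, mul_zero, add_zero] at hB
  rw [cost, hr, mul_zero, add_zero] at hcost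
  -- equality of integrals
  have heq : ∫ s, (s * p.1 s - min s δ * p.1 s) ∂mu = 0 := by
    rw [integral_sub (integrable_id_mul hxi) (integrable_min_mul hxi δ (le_of_lt hδ0))]
    have : (∫ s, min s δ * p.1 s ∂mu) = δ := le_antisymm (hCle.trans_eq hcost) (hB)
    rw [hcost, this, sub_self]
  have hae0 : (fun s => s * p.1 s - min s δ * p.1 s) =ᵐ[mu] 0 := by
    refine (integral_eq_zero_iff_of_nonneg_ae ?_ ?_).1 heq
    · filter_upwards [hx0] with s hs
      have := mul_le_mul_of_nonneg_right (min_le_left s δ) hs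
      simp only [Pi.zero_apply]
      linarith
    · exact (integrable_id_mul hxi).sub (integrable_min_mul hxi δ (le_of_lt hδ0))
  have hzero : ∀ᵐ s ∂mu, s ∈ Set.Ioc δ 1 → p.1 s = 0 := by
    filter_upwards [hae0] with s hs hsmem
    have h1 : min s δ = δ := min_eq_right (le_of_lt hsmem.1)
    simp only [Pi.zero_apply] at hs
    rw [h1] at hs
    have h2 : (s - δ) * p.1 s = 0 := by linarith
    rcases mul_eq_zero.1 h2 with h | h
    · exact absurd h (by intro hc; have := hsmem.1; linarith)
    · exact h
  have hIzero : ∫ s in Set.Ioc δ 1, p.1 s ∂mu = 0 := by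
    have : ∀ᵐ s ∂(mu.restrict (Set.Ioc δ 1)), p.1 s = 0 := by
      filter_upwards [ae_restrict_of_ae hzero, ae_restrict_mem measurableSet_Ioc] with s h1 h2
      exact h1 h2
    exact integral_eq_zero_of_ae this
  -- absolute continuity
  set S : ℕ → Set ℝ := fun n => Set.Ioc (δ - 1/(n+1)) δ with hS_def
  have hmuS : Filter.Tendsto (mu ∘ S) Filter.atTop (nhds 0) := by
    have hle : ∀ n : ℕ, (mu ∘ S) n ≤ ENNReal.ofReal (1/(n+1)) := by
      intro n
      refine le_trans (mu_le_volume _) ?_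
      rw [Real.volume_Ioc]
      apply ENNReal.ofReal_le_ofReal
      ring_nf
      simp
    have h2 : Filter.Tendsto (fun n : ℕ => ENNReal.ofReal (1/(n+1))) Filter.atTop (nhds 0) := by
      have := ENNReal.tendsto_ofReal (tendsto_one_div_add_atTop_nhds_zero_nat)
      simpa using this
    exact tendsto_of_tendsto_of_tendsto_of_le_of_le tendsto_const_nhds h2
      (fun n => zero_le) hle
  have habs : Filter.Tendsto (fun n => ∫ s in S n, |p.1 s| ∂mu) Filter.atTop (nhds 0) :=
    hxi.abs.tendsto_setIntegral_nhds_zero hmuS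
  obtain ⟨N, hN⟩ := (habs.eventually_lt_const (by norm_num : (0:ℝ) < 1)).exists
  -- pick a good point t₀
  set a : ℝ := max 0 (δ - 1/(N+1)) with ha_def
  have haδ : a < δ := by
    apply max_lt hδ0
    have : (0:ℝ) < 1/(N+1) := by positivity
    linarith
  obtain ⟨t₀, ht₀I, ht₀⟩ := exists_mem_of_pos (mu_Ioo_pos (le_max_left _ _) haδ (le_of_lt hδ1)) hfe
  have ht₀mem : t₀ ∈ Set.Icc (0:ℝ) δ := ⟨le_of_lt (lt_of_le_of_lt (le_max_left _ _) ht₀I.1), le_of_lt ht₀I.2⟩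
  rw [Set.indicator_of_mem ht₀mem, hr, add_zero] at ht₀
  -- split the integral
  have hsplit : ∫ s in Set.Ioc t₀ 1, p.1 s ∂mu
      = (∫ s in Set.Ioc t₀ δ, p.1 s ∂mu) + ∫ s in Set.Ioc δ 1, p.1 s ∂mu := by
    rw [← setIntegral_union (Set.Ioc_disjoint_Ioc_of_le le_rfl) measurableSet_Ioc
      hxi.integrableOn hxi.integrableOn,
      Set.Ioc_union_Ioc_eq_Ioc (le_of_lt ht₀I.2) (le_of_lt hδ1)]
  have hfinal : (1:ℝ) ≤ ∫ s in S N, |p.1 s| ∂mu := by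
    have h1 : (1:ℝ) ≤ ∫ s in Set.Ioc t₀ δ, p.1 s ∂mu := by
      have := ht₀
      simp only [Pi.one_apply] at this
      rw [hsplit, hIzero, add_zero] at this
      exact this
    refine h1.trans ?_
    calc ∫ s in Set.Ioc t₀ δ, p.1 s ∂mu ≤ ∫ s in Set.Ioc t₀ δ, |p.1 s| ∂mu := by
          apply integral_mono_ae hxi.integrableOn hxi.abs.integrableOn
          filter_upwards with s using le_abs_self _
      _ ≤ ∫ s in S N, |p.1 s| ∂mu := by
          apply setIntegral_mono_set hxi.abs.integrableOn
          · filter_upwards with s using abs_nonneg _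
          · apply HasSubset.Subset.eventuallyLE
            apply Set.Ioc_subset_Ioc_left
            exact le_trans (le_max_right 0 _) (le_of_lt ht₀I.1)
    
  linarith

lemma chiLp_ae (s : Set ℝ) (hs : MeasurableSet s) :
    ⇑(chiLp s hs) =ᵐ[mu] s.indicator (fun _ => (1:ℝ)) :=
  indicatorConstLp_coeFn

lemma feas_congr {y y' : ℝ → ℝ} (h : y =ᵐ[mu] y') {p : (ℝ → ℝ) × ℝ} (hp : Feas y p) :
    Feas y' p := by
  refine ⟨hp.1, hp.2.1, hp.2.2.1, ?_⟩
  filter_upwards [h, hp.2.2.2] with t h1 h2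
  rw [← h1]; exact h2

/-- `(0, 1)` is feasible for `b = χ_{[0,δ]}`. -/
lemma feas_zero_one (δ : ℝ) : Feas ((Set.Icc 0 δ).indicator 1) ((fun _ => 0), 1) := by
  refine ⟨MemLp.zero', by filter_upwards with t using le_refl 0, zero_le_one, ?_⟩
  filter_upwards with t
  simp only [integral_zero]
  rw [zero_add]
  by_cases ht : t ∈ Set.Icc (0:ℝ) δ
  · rw [Set.indicator_of_mem ht]; simp
  · rw [Set.indicator_of_notMem ht]; exact zero_le_one

lemma cost_zero_one (α : ℝ) : cost α ((fun _ => 0), 1) = α := by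
  rw [cost]; simp

/-- the near-optimal feasible points for the case `δ < α`. -/
lemma feas_eps (δ ε : ℝ) (hδ0 : 0 < δ) (hε : 0 < ε) (hδε : δ + ε ≤ 1) :
    Feas ((Set.Icc 0 δ).indicator 1)
      ((Set.Ioc δ (δ+ε)).indicator (fun _ => 1/ε), 0) := by
  refine ⟨memL2_indicator _ measurableSet_Ioc _, ?_, le_refl 0, ?_⟩
  · filter_upwards with t
    exact Set.indicator_nonneg (fun _ _ => by positivity) t
  · filter_upwards [ae_mem_Icc] with t ht
    rw [add_zero, setIntegral_indicator measurableSet_Ioc]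
    by_cases htδ : t ≤ δ
    · have hsub : Set.Ioc t 1 ∩ Set.Ioc δ (δ+ε) = Set.Ioc δ (δ+ε) := by
        apply Set.inter_eq_self_of_subset_right
        intro s hs
        exact ⟨lt_of_le_of_lt htδ hs.1, le_trans hs.2 hδε⟩
      rw [hsub, setIntegral_const, smul_eq_mul, measureReal_def, mu_Ioc0 δ (δ+ε) (le_of_lt hδ0) hδε]
      rw [ENNReal.toReal_ofReal (by linarith)]
      have : δ + ε - δ = ε := by ring
      rw [this, mul_one_div, div_self (ne_of_gt hε)]
      by_cases h : t ∈ Set.Icc (0:ℝ) δ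
      · rw [Set.indicator_of_mem h]; simp
      · rw [Set.indicator_of_notMem h]; exact zero_le_one
    · rw [Set.indicator_of_notMem (fun hmem => htδ hmem.2)]
      apply setIntegral_nonneg (measurableSet_Ioc.inter measurableSet_Ioc)
      intro s _
      positivity

lemma cost_eps (α δ ε : ℝ) (hδ0 : 0 < δ) (hε : 0 < ε) (hδε : δ + ε ≤ 1) :
    cost α ((Set.Ioc δ (δ+ε)).indicator (fun _ => 1/ε), 0) ≤ δ + ε := by
  rw [cost, mul_zero, add_zero]
  have h1 : ∀ t, t * (Set.Ioc δ (δ+ε)).indicator (fun _ => 1/ε) t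
      = (Set.Ioc δ (δ+ε)).indicator (fun t => t * (1/ε)) t := by
    intro t
    by_cases ht : t ∈ Set.Ioc δ (δ+ε)
    · rw [Set.indicator_of_mem ht, Set.indicator_of_mem ht]
    · rw [Set.indicator_of_notMem ht, Set.indicator_of_notMem ht, mul_zero]
  rw [integral_congr_ae (Filter.Eventually.of_forall h1), integral_indicator measurableSet_Ioc]
  calc ∫ t in Set.Ioc δ (δ+ε), t * (1/ε) ∂mu
      ≤ ∫ t in Set.Ioc δ (δ+ε), (δ+ε) * (1/ε) ∂mu := by
        apply setIntegral_mono_on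
        · exact (integrable_id_mul (integrable_const (1/ε))).integrableOn
        · exact (integrable_const _).integrableOn
        · exact measurableSet_Ioc
        · intro t ht
          exact mul_le_mul_of_nonneg_right ht.2 (by positivity)
    _ = δ + ε := by
        rw [setIntegral_const, smul_eq_mul, measureReal_def, mu_Ioc0 δ (δ+ε) (le_of_lt hδ0) hδε,
          ENNReal.toReal_ofReal (by linarith)]
        have : δ + ε - δ = ε := by ring
        rw [this]
        field_simp

lemma ereal_sandwich (e : EReal) (d η : ℝ) (hη : 0 < η) (h1 : (d : EReal) ≤ e)
    (h2 : ∀ ε : ℝ, 0 < ε → ε ≤ η → e ≤ ((d + ε : ℝ) : EReal)) : e = (d : EReal) := by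
  have htop : e ≠ ⊤ := by
    intro h
    have := h2 η hη le_rfl
    rw [h] at this
    exact absurd this (by exact_mod_cast (EReal.coe_lt_top (d + η)).not_ge)
  have hbot : e ≠ ⊥ := by
    intro h
    rw [h] at h1
    exact absurd h1 (by exact_mod_cast (EReal.bot_lt_coe d).not_ge)
  have he : e = ((e.toReal : ℝ) : EReal) := (EReal.coe_toReal htop hbot).symm
  rw [he]
  norm_cast
  rw [he] at h1 h2
  have hd : d ≤ e.toReal := by exact_mod_cast h1
  have : e.toReal ≤ d := by
    apply _root_.le_of_forall_pos_le_add
    intro ε hε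
    rcases le_total ε η with h | h
    · exact_mod_cast h2 ε hε h
    · have := h2 η hη le_rfl
      have h3 : e.toReal ≤ d + η := by exact_mod_cast this
      linarith
  linarith

/-- In Kretschmer's setting with `α > 0`, `δ ∈ (0,1)` and
`b := χ_{[0,δ]}`: `val(P_b) = val(D_b) = min{δ,α}`; the dual problem has the optimal
solution `z = χ_{[0,min{α,δ}]}`; hence `∂v(b) ≠ ∅`; and the primal problem has an
optimal solution iff `α ≤ δ`. -/
theorem stmt18 (α δ : ℝ) (hα : 0 < α) (hδ0 : 0 < δ) (hδ1 : δ < 1) :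
    val α (chiLp (Set.Icc 0 δ) measurableSet_Icc) = ((min δ α : ℝ) : EReal) ∧
    valD α ((Set.Icc 0 δ).indicator 1) = ((min δ α : ℝ) : EReal) ∧
    (DFeas α ((Set.Icc 0 (min α δ)).indicator 1) ∧
      ((∫ t, (Set.Icc 0 δ).indicator 1 t * (Set.Icc 0 (min α δ)).indicator 1 t ∂mu : ℝ)
        : EReal) = valD α ((Set.Icc 0 δ).indicator 1)) ∧
    (subdiffL2 α (chiLp (Set.Icc 0 δ) measurableSet_Icc)).Nonempty ∧
    ((∃ p : (ℝ → ℝ) × ℝ, Feas (⇑(chiLp (Set.Icc 0 δ) measurableSet_Icc)) p ∧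
        ((cost α p : ℝ) : EReal) = val α (chiLp (Set.Icc 0 δ) measurableSet_Icc)) ↔
      α ≤ δ) := by
  set m : ℝ := min α δ with hm_def
  have hm0 : 0 ≤ m := le_min (le_of_lt hα) (le_of_lt hδ0)
  have hmδ : m ≤ δ := min_le_right _ _
  have hmα : m ≤ α := min_le_left _ _
  have hm1 : m ≤ 1 := hmδ.trans (le_of_lt hδ1)
  have hmm : min δ α = m := min_comm δ α
  set bLp : Lp ℝ 2 mu := chiLp (Set.Icc 0 δ) measurableSet_Icc with hbLp
  have hb_ae : ⇑bLp =ᵐ[mu] (Set.Icc 0 δ).indicator (fun _ => (1:ℝ)) :=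
    chiLp_ae _ measurableSet_Icc
  have hbi : Integrable (⇑bLp) mu := integrable_of_memL2 (Lp.memLp bLp)
  have hibc : ∀ c : ℝ, 0 ≤ c → c ≤ δ → c ≤ 1 →
      ∫ t in Set.Icc 0 c, (⇑bLp) t ∂mu = c := by
    intro c hc0 hcδ hc1
    rw [integral_congr_ae (ae_restrict_of_ae hb_ae),
      setIntegral_indicator measurableSet_Icc]
    have h : Set.Icc (0:ℝ) c ∩ Set.Icc 0 δ = Set.Icc 0 c := by
      rw [Set.Icc_inter_Icc]
      simp [min_eq_left hcδ]
    rw [h, setIntegral_const, smul_eq_mul, mul_one, measureReal_def, mu_Icc0 c hc0 hc1,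
      ENNReal.toReal_ofReal hc0]
  -- primal lower bound
  have hval_ge : ((m : ℝ) : EReal) ≤ val α bLp := by
    rw [val]
    refine le_iInf₂ ?_
    intro p hp
    rw [EReal.coe_le_coe_iff]
    calc m = ∫ t in Set.Icc 0 m, (⇑bLp) t ∂mu := (hibc m hm0 hmδ hm1).symm
      _ ≤ cost α p := weak α m hm0 hm1 hmα hbi hp
  -- primal value
  have hval : val α bLp = ((m : ℝ) : EReal) := by
    rcases le_total α δ with hcase | hcase
    · have hmeq : m = α := min_eq_left hcase
      apply le_antisymm _ hval_ge
      have h1 : val α bLp ≤ ((cost α ((fun _ => 0), 1) : ℝ) : EReal) :=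
        iInf₂_le _ (feas_congr hb_ae.symm (feas_zero_one δ))
      rw [cost_zero_one] at h1
      rw [hmeq]
      exact h1
    · have hmeq : m = δ := min_eq_right hcase
      rw [hmeq]
      apply ereal_sandwich _ δ (1 - δ) (by linarith) (by rw [← hmeq]; exact hval_ge)
      intro ε hε hε1
      have hfe := feas_congr hb_ae.symm (feas_eps δ ε hδ0 hε (by linarith))
      have h1 : val α bLp
          ≤ ((cost α ((Set.Ioc δ (δ+ε)).indicator (fun _ => 1/ε), 0) : ℝ) : EReal) :=
        iInf₂_le _ hfe
      refine h1.trans ?_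
      rw [EReal.coe_le_coe_iff]
      exact cost_eps α δ ε hδ0 hε (by linarith)
  -- dual
  have hzfeas : DFeas α ((Set.Icc 0 m).indicator 1) := dfeas_indicator α m hm0 hm1 hmα
  have hpair : ∫ t, (Set.Icc 0 δ).indicator 1 t * (Set.Icc 0 m).indicator 1 t ∂mu = m := by
    rw [pair_indicator _ _ measurableSet_Icc measurableSet_Icc (Set.Icc_subset_Icc_right hmδ),
      mu_Icc0 m hm0 hm1, ENNReal.toReal_ofReal hm0]
  have hvalD_le : valD α ((Set.Icc 0 δ).indicator 1) ≤ ((m : ℝ) : EReal) := by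
    rw [valD]
    refine iSup₂_le ?_
    intro z hz
    rw [EReal.coe_le_coe_iff]
    exact (dual_ub α δ hα hδ0 hδ1 hz).trans_eq hmm
  have hvalD_ge : ((m : ℝ) : EReal) ≤ valD α ((Set.Icc 0 δ).indicator 1) := by
    have h1 := le_iSup₂ (f := fun z (_ : DFeas α z) =>
      ((∫ t, (Set.Icc 0 δ).indicator 1 t * z t ∂mu : ℝ) : EReal)) _ hzfeas
    rw [hpair] at h1
    exact h1
  have hvalD : valD α ((Set.Icc 0 δ).indicator 1) = ((m : ℝ) : EReal) :=
    le_antisymm hvalD_le hvalD_ge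
  -- subdifferential
  have hsub : (subdiffL2 α bLp).Nonempty := by
    refine ⟨chiLp (Set.Icc 0 m) measurableSet_Icc, m, hval, ?_⟩
    intro y
    set Z : Lp ℝ 2 mu := chiLp (Set.Icc 0 m) measurableSet_Icc with hZ
    have hyi : Integrable (⇑y) mu := integrable_of_memL2 (Lp.memLp y)
    have hinner : (inner ℝ (y - bLp) Z : ℝ) = (∫ t in Set.Icc 0 m, (⇑y) t ∂mu) - m := by
      rw [L2.inner_def]
      have h1 : ∫ a, (inner ℝ ((⇑(y - bLp)) a) ((⇑Z) a) : ℝ) ∂mu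
          = ∫ t in Set.Icc 0 m, ((⇑y) t - (⇑bLp) t) ∂mu := by
        rw [← integral_indicator measurableSet_Icc]
        apply integral_congr_ae
        filter_upwards [Lp.coeFn_sub y bLp, chiLp_ae (Set.Icc 0 m) measurableSet_Icc]
          with t h2 h3
        simp only [RCLike.inner_apply, starRingEnd_apply, star_trivial]
        rw [h2, h3, Pi.sub_apply]
        by_cases ht : t ∈ Set.Icc (0:ℝ) m
        · rw [Set.indicator_of_mem ht, Set.indicator_of_mem ht, one_mul]
        · rw [Set.indicator_of_notMem ht, Set.indicator_of_notMem ht, zero_mul]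
      rw [h1, integral_sub hyi.integrableOn hbi.integrableOn, hibc m hm0 hmδ hm1]
    rw [hinner, sub_add_cancel]
    rw [val]
    refine le_iInf₂ ?_
    intro p hp
    rw [EReal.coe_le_coe_iff]
    exact weak α m hm0 hm1 hmα hyi hp
  -- attainment
  have hiff : (∃ p : (ℝ → ℝ) × ℝ, Feas (⇑bLp) p ∧ ((cost α p : ℝ) : EReal) = val α bLp)
      ↔ α ≤ δ := by
    constructor
    · rintro ⟨p, hp, hpc⟩
      by_contra hcon
      push_neg at hcon
      have hmeq : m = δ := min_eq_right (le_of_lt hcon)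
      rw [hval, hmeq] at hpc
      have hc : cost α p = δ := by exact_mod_cast hpc
      exact not_opt α δ hcon hδ0 hδ1 (feas_congr hb_ae hp) hc
    · intro hcase
      refine ⟨((fun _ => 0), 1), feas_congr hb_ae.symm (feas_zero_one δ), ?_⟩
      rw [hval, cost_zero_one]
      norm_cast
      exact (min_eq_left hcase).symm
  exact ⟨by rw [hmm]; exact hval, by rw [hmm]; exact hvalD,
    ⟨hzfeas, by rw [hpair, hvalD]⟩, hsub, hiff⟩
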